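/- Let G and G' be finite simple graphs, both strongly regular with the same parameters (n, d, λ, μ) with μ ≥ 1. Then every vertex v of G and every vertex v' of G' have equal depth-2 ELENE encodings; i.e., node-level ELENE (node-centric) encodings cannot distinguish non-isomorphic strongly regular graphs with equal parameters. -/

import Mathlib

open Classical in
/-- The closed `k`-ball `B_k(v) = {u | dist_G(u, v) ≤ k}` (as a finset of vertices that
are reachable from `v` within distance `k`). -/
noncomputable def kball {V : Type*} [Fintype V] (G : SimpleGraph V) (v : V) (k : ℕ) :
    Finset V :=
  Finset.univ.filter fun u => G.Reachable u v ∧ G.dist u v ≤ k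

open Classical in
/-- `d⁻(u|v)`: number of neighbors `w ∈ B_k(v)` of `u` with `dist_G(w, v) = dist_G(u, v) - 1`. -/
noncomputable def dMinus {V : Type*} [Fintype V] (G : SimpleGraph V) (v : V) (k : ℕ)
    (u : V) : ℕ :=
  ((kball G v k).filter fun w => G.Adj u w ∧ G.dist w v = G.dist u v - 1).card

open Classical in
/-- `d⁰(u|v)`: number of neighbors `w ∈ B_k(v)` of `u` with `dist_G(w, v) = dist_G(u, v)`. -/
noncomputable def dZero {V : Type*} [Fintype V] (G : SimpleGraph V) (v : V) (k : ℕ)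
    (u : V) : ℕ :=
  ((kball G v k).filter fun w => G.Adj u w ∧ G.dist w v = G.dist u v).card

open Classical in
/-- `d⁺(u|v)`: number of neighbors `w ∈ B_k(v)` of `u` with `dist_G(w, v) = dist_G(u, v) + 1`. -/
noncomputable def dPlus {V : Type*} [Fintype V] (G : SimpleGraph V) (v : V) (k : ℕ)
    (u : V) : ℕ :=
  ((kball G v k).filter fun w => G.Adj u w ∧ G.dist w v = G.dist u v + 1).card

/-- `d_S(u|v) = d⁻(u|v) + d⁰(u|v) + d⁺(u|v)`, the degree of `u` in the subgraph induced
on `B_k(v)`. -/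
noncomputable def dSub {V : Type*} [Fintype V] (G : SimpleGraph V) (v : V) (k : ℕ)
    (u : V) : ℕ :=
  dMinus G v k u + dZero G v k u + dPlus G v k u

/-- The depth-`k` (node-centric) ELENE encoding of `v`: the multiset of quadruplets
`(dist_G(u, v), d⁻(u|v), d_S(u|v), d⁺(u|v))` over all `u ∈ B_k(v)`. -/
noncomputable def elene {V : Type*} [Fintype V] (G : SimpleGraph V) (k : ℕ) (v : V) :
    Multiset (ℕ × ℕ × ℕ × ℕ) :=
  (kball G v k).val.map fun u => (G.dist u v, dMinus G v k u, dSub G v k u, dPlus G v k u)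


open Finset SimpleGraph

section Aux
variable {V : Type*} [Fintype V] {G : SimpleGraph V} [DecidableRel G.Adj] {n d l m : ℕ}

open Classical in
lemma srg_reach_dist (h : G.IsSRGWith n d l m) (hm : 1 ≤ m) (u v : V) :
    G.Reachable u v ∧ G.dist u v ≤ 2 := by
  by_cases huv : u = v
  · subst huv; exact ⟨Reachable.refl u, by simp [SimpleGraph.dist_self]⟩
  by_cases hadj : G.Adj u v
  · exact ⟨hadj.reachable, by rw [SimpleGraph.dist_eq_one_iff_adj.mpr hadj]; norm_num⟩
  · have hcard : Fintype.card (G.commonNeighbors u v) = m := h.of_not_adj huv hadj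
    have hne : Nonempty (G.commonNeighbors u v) := by
      rw [← Fintype.card_pos_iff, hcard]; omega
    obtain ⟨w, hw⟩ := hne
    rw [SimpleGraph.mem_commonNeighbors] at hw
    let p : G.Walk u v := .cons hw.1 (.cons hw.2.symm .nil)
    exact ⟨p.reachable, (SimpleGraph.dist_le p).trans (by simp [p])⟩

open Classical in
lemma srg_kball (h : G.IsSRGWith n d l m) (hm : 1 ≤ m) (v : V) :
    kball G v 2 = Finset.univ := by
  ext u
  simp [kball, (srg_reach_dist h hm u v).1, (srg_reach_dist h hm u v).2]

lemma srg_dist_two (h : G.IsSRGWith n d l m) (hm : 1 ≤ m) {u v : V}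
    (hne : u ≠ v) (hadj : ¬ G.Adj u v) : G.dist u v = 2 := by
  have h1 := srg_reach_dist h hm u v
  have h0 : G.dist u v ≠ 0 := fun hz => hne (h1.1.dist_eq_zero_iff.mp hz)
  have h2 : G.dist u v ≠ 1 := fun hz => hadj (SimpleGraph.dist_eq_one_iff_adj.mp hz)
  omega

open Classical in
lemma card_filter_common (u v : V) :
    (Finset.univ.filter fun w => G.Adj u w ∧ G.Adj v w).card
      = Fintype.card (G.commonNeighbors u v) := by
  rw [← Set.toFinset_card]
  congr 1
  ext w
  simp [SimpleGraph.mem_commonNeighbors]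


open Classical in
lemma srg_self_tuple (h : G.IsSRGWith n d l m) (hm : 1 ≤ m) (v : V) :
    dMinus G v 2 v = 0 ∧ dZero G v 2 v = 0 ∧ dPlus G v 2 v = d := by
  have hkb := srg_kball h hm v
  have hz : ∀ w : V, G.dist w v = 0 ↔ w = v := fun w =>
    (srg_reach_dist h hm w v).1.dist_eq_zero_iff
  refine ⟨?_, ?_, ?_⟩
  · simp only [dMinus, hkb, SimpleGraph.dist_self]
    rw [Finset.card_eq_zero, Finset.filter_eq_empty_iff]
    rintro w - ⟨hadj, hd⟩
    rw [Nat.zero_sub, hz w] at hd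
    exact G.loopless.irrefl v (by rwa [hd] at hadj)
  · simp only [dZero, hkb, SimpleGraph.dist_self]
    rw [Finset.card_eq_zero, Finset.filter_eq_empty_iff]
    rintro w - ⟨hadj, hd⟩
    rw [hz w] at hd
    exact G.loopless.irrefl v (by rwa [hd] at hadj)
  · simp only [dPlus, hkb, SimpleGraph.dist_self, Nat.zero_add]
    have : (Finset.univ.filter fun w => G.Adj v w ∧ G.dist w v = 1)
        = G.neighborFinset v := by
      ext w
      simp only [Finset.mem_filter, Finset.mem_univ, true_and,
        SimpleGraph.mem_neighborFinset, SimpleGraph.dist_eq_one_iff_adj]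
      constructor
      · exact fun hw => hw.1
      · exact fun hw => ⟨hw, hw.symm⟩
    rw [this]
    exact h.regular v

open Classical in
lemma srg_adj_tuple (h : G.IsSRGWith n d l m) (hm : 1 ≤ m) {u v : V} (hadj : G.Adj u v) :
    dMinus G v 2 u = 1 ∧ dZero G v 2 u = l ∧ 1 + l + dPlus G v 2 u = d := by
  have hkb := srg_kball h hm v
  have hd1 : G.dist u v = 1 := SimpleGraph.dist_eq_one_iff_adj.mpr hadj
  have hz : ∀ w : V, G.dist w v = 0 ↔ w = v := fun w =>
    (srg_reach_dist h hm w v).1.dist_eq_zero_iff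
  have hA : (Finset.univ.filter fun w => G.Adj u w ∧ G.dist w v = 0) = {v} := by
    ext w
    simp only [Finset.mem_filter, Finset.mem_univ, true_and, Finset.mem_singleton, hz w]
    constructor
    · exact fun hw => hw.2
    · rintro rfl; exact ⟨hadj, rfl⟩
  have hB : (Finset.univ.filter fun w => G.Adj u w ∧ G.dist w v = 1).card = l := by
    have : (Finset.univ.filter fun w => G.Adj u w ∧ G.dist w v = 1)
        = (Finset.univ.filter fun w => G.Adj u w ∧ G.Adj v w) := by
      apply Finset.filter_congr
      intro w _
      rw [SimpleGraph.dist_eq_one_iff_adj]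
      constructor
      · exact fun hw => ⟨hw.1, hw.2.symm⟩
      · exact fun hw => ⟨hw.1, hw.2.symm⟩
    rw [this, card_filter_common, h.of_adj u v hadj]
  refine ⟨?_, ?_, ?_⟩
  · simp only [dMinus, hkb, hd1, Nat.sub_self, hA, Finset.card_singleton]
  · simp only [dZero, hkb, hd1, hB]
  · simp only [dPlus, hkb, hd1]
    -- neighbors of u split into dist 0, 1, 2
    have hsplit : G.neighborFinset u
        = (Finset.univ.filter fun w => G.Adj u w ∧ G.dist w v = 0)
          ∪ (Finset.univ.filter fun w => G.Adj u w ∧ G.dist w v = 1)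
          ∪ (Finset.univ.filter fun w => G.Adj u w ∧ G.dist w v = 1 + 1) := by
      ext w
      simp only [Finset.mem_union, Finset.mem_filter, Finset.mem_univ, true_and,
        SimpleGraph.mem_neighborFinset]
      constructor
      · intro hw
        have hle := (srg_reach_dist h hm w v).2
        have h012 : G.dist w v = 0 ∨ G.dist w v = 1 ∨ G.dist w v = 1 + 1 := by omega
        rcases h012 with hd | hd | hd
        · exact Or.inl (Or.inl ⟨hw, hd⟩)
        · exact Or.inl (Or.inr ⟨hw, hd⟩)
        · exact Or.inr ⟨hw, hd⟩
      · rintro ((⟨hw, -⟩ | ⟨hw, -⟩) | ⟨hw, -⟩) <;> exact hw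
    have hdisj1 : Disjoint (Finset.univ.filter fun w => G.Adj u w ∧ G.dist w v = 0)
        (Finset.univ.filter fun w => G.Adj u w ∧ G.dist w v = 1) := by
      rw [Finset.disjoint_left]
      rintro w hw1 hw2
      simp only [Finset.mem_filter] at hw1 hw2
      omega
    have hdisj2 : Disjoint ((Finset.univ.filter fun w => G.Adj u w ∧ G.dist w v = 0)
        ∪ (Finset.univ.filter fun w => G.Adj u w ∧ G.dist w v = 1))
        (Finset.univ.filter fun w => G.Adj u w ∧ G.dist w v = 1 + 1) := by
      rw [Finset.disjoint_left]
      rintro w hw1 hw2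
      simp only [Finset.mem_union, Finset.mem_filter] at hw1 hw2
      omega
    have hcard := h.regular u
    rw [← SimpleGraph.card_neighborFinset_eq_degree] at hcard
    rw [hsplit, Finset.card_union_of_disjoint hdisj2,
      Finset.card_union_of_disjoint hdisj1, hA, Finset.card_singleton, hB] at hcard
    omega


open Classical in
lemma srg_far_tuple (h : G.IsSRGWith n d l m) (hm : 1 ≤ m) {u v : V}
    (hne : u ≠ v) (hnadj : ¬ G.Adj u v) :
    dMinus G v 2 u = m ∧ m + dZero G v 2 u = d ∧ dPlus G v 2 u = 0 := by
  have hkb := srg_kball h hm v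
  have hd2 : G.dist u v = 2 := srg_dist_two h hm hne hnadj
  have hA : (Finset.univ.filter fun w => G.Adj u w ∧ G.dist w v = 2 - 1).card = m := by
    have : (Finset.univ.filter fun w => G.Adj u w ∧ G.dist w v = 2 - 1)
        = (Finset.univ.filter fun w => G.Adj u w ∧ G.Adj v w) := by
      apply Finset.filter_congr
      intro w _
      rw [show (2:ℕ) - 1 = 1 from rfl, SimpleGraph.dist_eq_one_iff_adj]
      constructor
      · exact fun hw => ⟨hw.1, hw.2.symm⟩
      · exact fun hw => ⟨hw.1, hw.2.symm⟩
    rw [this, card_filter_common, h.of_not_adj hne hnadj]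
  refine ⟨?_, ?_, ?_⟩
  · simp only [dMinus, hkb, hd2]
    exact hA
  · simp only [dZero, hkb, hd2]
    have hsplit : G.neighborFinset u
        = (Finset.univ.filter fun w => G.Adj u w ∧ G.dist w v = 2 - 1)
          ∪ (Finset.univ.filter fun w => G.Adj u w ∧ G.dist w v = 2) := by
      ext w
      simp only [Finset.mem_union, Finset.mem_filter, Finset.mem_univ, true_and,
        SimpleGraph.mem_neighborFinset]
      constructor
      · intro hw
        have hle := (srg_reach_dist h hm w v).2
        have hwv : w ≠ v := by rintro rfl; exact hnadj hw
        have h0 : G.dist w v ≠ 0 := fun hz =>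
          hwv ((srg_reach_dist h hm w v).1.dist_eq_zero_iff.mp hz)
        have h12 : G.dist w v = 2 - 1 ∨ G.dist w v = 2 := by omega
        rcases h12 with hd | hd
        · exact Or.inl ⟨hw, hd⟩
        · exact Or.inr ⟨hw, hd⟩
      · rintro (⟨hw, -⟩ | ⟨hw, -⟩) <;> exact hw
    have hdisj : Disjoint (Finset.univ.filter fun w => G.Adj u w ∧ G.dist w v = 2 - 1)
        (Finset.univ.filter fun w => G.Adj u w ∧ G.dist w v = 2) := by
      rw [Finset.disjoint_left]
      rintro w hw1 hw2
      simp only [Finset.mem_filter] at hw1 hw2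
      omega
    have hcard := h.regular u
    rw [← SimpleGraph.card_neighborFinset_eq_degree] at hcard
    rw [hsplit, Finset.card_union_of_disjoint hdisj, hA] at hcard
    exact hcard
  · simp only [dPlus, hkb, hd2]
    rw [Finset.card_eq_zero, Finset.filter_eq_empty_iff]
    rintro w - ⟨hadj, hd⟩
    have := (srg_reach_dist h hm w v).2
    omega


open Classical in
lemma elene_srg (h : G.IsSRGWith n d l m) (hm : 1 ≤ m) (v : V) :
    elene G 2 v = Multiset.replicate 1 (0, 0, d, d)
      + Multiset.replicate d (1, 1, d, d - 1 - l)
      + Multiset.replicate (n - 1 - d) (2, m, d, 0) := by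
  have hkb := srg_kball h hm v
  set f : V → ℕ × ℕ × ℕ × ℕ :=
    fun u => (G.dist u v, dMinus G v 2 u, dSub G v 2 u, dPlus G v 2 u) with hf
  have hfv : f v = (0, 0, d, d) := by
    obtain ⟨h1, h2, h3⟩ := srg_self_tuple h hm v
    simp only [hf, dSub, h1, h2, h3, SimpleGraph.dist_self, Nat.zero_add]
  have hfadj : ∀ u, G.Adj u v → f u = (1, 1, d, d - 1 - l) := by
    intro u hadj
    obtain ⟨h1, h2, h3⟩ := srg_adj_tuple h hm hadj
    simp only [hf, dSub, h1, h2, SimpleGraph.dist_eq_one_iff_adj.mpr hadj,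
      Prod.mk.injEq, true_and]
    omega
  have hffar : ∀ u, u ≠ v → ¬ G.Adj u v → f u = (2, m, d, 0) := by
    intro u hne hnadj
    obtain ⟨h1, h2, h3⟩ := srg_far_tuple h hm hne hnadj
    simp only [hf, dSub, h1, h3, srg_dist_two h hm hne hnadj,
      Prod.mk.injEq, true_and, and_true]
    omega
  have hel : elene G 2 v = (Finset.univ : Finset V).val.map f := by
    rw [elene, hkb]
  rw [hel]
  have hne01 : ((0 : ℕ), (0 : ℕ), d, d) ≠ (1, 1, d, d - 1 - l) := by
    simp [Prod.ext_iff]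
  have hne02 : ((0 : ℕ), (0 : ℕ), d, d) ≠ (2, m, d, 0) := by
    simp [Prod.ext_iff]
  have hne12 : ((1 : ℕ), (1 : ℕ), d, d - 1 - l) ≠ (2, m, d, 0) := by
    simp [Prod.ext_iff]
  -- count of each vertex class
  have hcv : (Finset.univ.filter fun u : V => u = v).card = 1 := by
    have : (Finset.univ.filter fun u : V => u = v) = {v} := by
      ext u; simp
    rw [this, Finset.card_singleton]
  have hN : (Finset.univ.filter fun u : V => G.Adj u v) = G.neighborFinset v := by
    ext u
    simp [SimpleGraph.mem_neighborFinset, SimpleGraph.adj_comm]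
  have hcN : (Finset.univ.filter fun u : V => G.Adj u v).card = d := by
    rw [hN]; exact h.regular v
  have hcR : (Finset.univ.filter fun u : V => ¬ u = v ∧ ¬ G.Adj u v).card = n - 1 - d := by
    have hRe : (Finset.univ.filter fun u : V => ¬ u = v ∧ ¬ G.Adj u v)
        = Finset.univ \ ({v} ∪ (Finset.univ.filter fun u : V => G.Adj u v)) := by
      ext u
      simp only [Finset.mem_filter, Finset.mem_univ, true_and, Finset.mem_sdiff,
        Finset.mem_union, Finset.mem_singleton]
      tauto
    have hvN : v ∉ (Finset.univ.filter fun u : V => G.Adj u v) := by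
      simp
    rw [hRe, Finset.card_sdiff_of_subset (Finset.subset_univ _),
      Finset.card_union_of_disjoint (Finset.disjoint_singleton_left.mpr hvN),
      Finset.card_singleton, hcN, Finset.card_univ, h.card]
    omega
  rw [Multiset.ext]
  intro a
  rw [Multiset.count_map]
  simp only [Multiset.count_add, Multiset.count_replicate]
  have hfilt : ∀ (p : V → Prop) (inst : DecidablePred p),
      Multiset.card (@Multiset.filter V p inst Finset.univ.val)
        = (Finset.univ.filter p).card := by
    intro p inst
    show Multiset.card _ = Multiset.card ((Finset.univ.filter p).val)
    rw [Finset.filter_val]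
  by_cases h0 : a = (0, 0, d, d)
  · subst h0
    rw [if_pos rfl, if_neg (Ne.symm hne01), if_neg (Ne.symm hne02)]
    rw [hfilt]
    have : (Finset.univ.filter fun u : V => (0, 0, d, d) = f u)
        = Finset.univ.filter fun u : V => u = v := by
      apply Finset.filter_congr
      intro u _
      constructor
      · intro hu
        by_contra hne
        by_cases hadj : G.Adj u v
        · exact hne01 (hu.trans (hfadj u hadj))
        · exact hne02 (hu.trans (hffar u hne hadj))
      · rintro rfl
        exact hfv.symm
    rw [this, hcv]
  · by_cases h1 : a = (1, 1, d, d - 1 - l)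
    · subst h1
      rw [if_neg hne01, if_pos rfl, if_neg (Ne.symm hne12)]
      rw [hfilt]
      have : (Finset.univ.filter fun u : V => (1, 1, d, d - 1 - l) = f u)
          = Finset.univ.filter fun u : V => G.Adj u v := by
        apply Finset.filter_congr
        intro u _
        constructor
        · intro hu
          by_contra hadj
          by_cases hne : u = v
          · subst hne
            exact hne01 (hu.trans hfv).symm
          · exact hne12 (hu.trans (hffar u hne hadj))
        · intro hadj
          exact (hfadj u hadj).symm
      rw [this, hcN]
      omega
    · by_cases h2 : a = (2, m, d, 0)
      · subst h2
        rw [if_neg hne02, if_neg hne12, if_pos rfl]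
        rw [hfilt]
        have : (Finset.univ.filter fun u : V => (2, m, d, 0) = f u)
            = Finset.univ.filter fun u : V => ¬ u = v ∧ ¬ G.Adj u v := by
          apply Finset.filter_congr
          intro u _
          constructor
          · intro hu
            constructor
            · rintro rfl
              exact hne02 (hu.trans hfv).symm
            · intro hadj
              exact hne12 (hu.trans (hfadj u hadj)).symm
          · rintro ⟨hne, hadj⟩
            exact (hffar u hne hadj).symm
        rw [this, hcR]
        omega
      · rw [if_neg (Ne.symm h0), if_neg (Ne.symm h1), if_neg (Ne.symm h2)]
        rw [hfilt]
        have : (Finset.univ.filter fun u : V => a = f u) = ∅ := by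
          rw [Finset.filter_eq_empty_iff]
          intro u _
          by_cases hne : u = v
          · subst hne
            rw [hfv]; exact h0
          · by_cases hadj : G.Adj u v
            · rw [hfadj u hadj]; exact h1
            · rw [hffar u hne hadj]; exact h2
        rw [this]
        simp

end Aux

/-- If `G` and `G'` are both strongly regular with the same parameters
`(n, d, l, m)`, `m ≥ 1`, then every vertex `v` of `G` and every vertex `v'` of `G'` have
equal depth-2 ELENE encodings: node-centric ELENE encodings cannot distinguish strongly
regular graphs with equal parameters. -/
theorem srg_elene_two_eq_of_same_params {V V' : Type*} [Fintype V] [Fintype V']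
    {G : SimpleGraph V} {G' : SimpleGraph V'} [DecidableRel G.Adj] [DecidableRel G'.Adj]
    {n d l m : ℕ}
    (h : G.IsSRGWith n d l m) (h' : G'.IsSRGWith n d l m) (hm : 1 ≤ m) :
    ∀ (v : V) (v' : V'), elene G 2 v = elene G' 2 v' := by
  intro v v'
  rw [elene_srg h hm v, elene_srg h' hm v']
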